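/- The dual of the Hadamard rank metric code, H_2(q,m,k) = H_1(q,m,k)^⊥, has parameters [mk, (m−1)k, 2]: length mk, dimension (m−1)k, and minimum rank distance 2 (for m ≥ 2). -/

import Mathlib

open Matrix

/-- The dual `H_2(q,m,k)` of the Hadamard rank metric code `H_1(q,m,k)` has
parameters `[mk, (m−1)k, 2]`: length `mk`, dimension `(m−1)k`, and minimum rank distance `2`
(for `m ≥ 2`). -/
theorem hadamard_dual_parameters
    {Fq Fqm : Type*} [Field Fq] [Field Fqm] [Algebra Fq Fqm]
    [Fintype Fq] [Fintype Fqm]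
    {m k : ℕ} (hm : Module.finrank Fq Fqm = m) (hk0 : 0 < k)
    (P : Fin (m * k) → Fin k → Fqm)
    (hPind : LinearIndependent Fq P)
    (hPspan : Submodule.span Fq (Set.range P) = ⊤)
    (C Cd : Submodule Fqm (Fin (m * k) → Fqm))
    (hC : C = Submodule.span Fqm
      (Set.range fun i : Fin k => fun j : Fin (m * k) => P j i))
    (hCd : ∀ y, y ∈ Cd ↔ ∀ x ∈ C, ∑ i, x i * y i = 0) :
    Module.finrank Fqm Cd = (m - 1) * k ∧
    (2 ≤ m → sInf { w | ∃ x ∈ Cd, x ≠ 0 ∧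
      w = Module.finrank Fq (Submodule.span Fq (Set.range x)) } = 2) := by
  classical
  have hm1 : 1 ≤ m := by
    rw [← hm]; exact Module.finrank_pos
  -- the linear map whose kernel is `Cd`
  let Φ : (Fin (m * k) → Fqm) →ₗ[Fqm] (Fin k → Fqm) :=
    Matrix.mulVecLin (Matrix.of fun i j => P j i)
  have hΦapp : ∀ (y : Fin (m * k) → Fqm) (i : Fin k), Φ y i = ∑ j, P j i * y j := by
    intro y i
    simp [Φ, Matrix.mulVecLin, Matrix.mulVec, dotProduct]
  -- `Cd` is the kernel of `Φ`
  have hCdker : Cd = LinearMap.ker Φ := by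
    ext y
    rw [hCd, LinearMap.mem_ker]
    constructor
    · intro h
      funext i
      have hmem : (fun j : Fin (m * k) => P j i) ∈ C := by
        rw [hC]; exact Submodule.subset_span ⟨i, rfl⟩
      have := h _ hmem
      rw [hΦapp]
      simpa using this
    · intro h x hx
      rw [hC] at hx
      induction hx using Submodule.span_induction with
      | mem v hv =>
        obtain ⟨i, rfl⟩ := hv
        have := congrFun h i
        rw [hΦapp] at this
        simpa using this
      | zero => simp
      | add u v _ _ hu hv => simp [add_mul, Finset.sum_add_distrib, hu, hv]
      | smul a u _ hu =>
        simp only [Pi.smul_apply, smul_eq_mul, mul_assoc, ← Finset.mul_sum, hu, mul_zero]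
  -- `Φ` is surjective
  have hsurj : Function.Surjective Φ := by
    intro t
    have ht : t ∈ Submodule.span Fqm (Set.range P) := by
      have h1 : Submodule.span Fq (Set.range P) ≤
          (Submodule.span Fqm (Set.range P)).restrictScalars Fq :=
        Submodule.span_le.mpr fun v hv => Submodule.subset_span hv
      exact h1 (hPspan ▸ Submodule.mem_top)
    obtain ⟨y, hy⟩ := (Submodule.mem_span_range_iff_exists_fun Fqm).mp ht
    refine ⟨y, ?_⟩
    funext i
    rw [hΦapp]
    calc ∑ j, P j i * y j = ∑ j, y j • P j i := by
          simp [smul_eq_mul, mul_comm]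
      _ = (∑ j, y j • P j) i := by simp
      _ = t i := by rw [hy]
  -- dimension of `Cd`
  have hdim : Module.finrank Fqm Cd = (m - 1) * k := by
    have h := LinearMap.finrank_range_add_finrank_ker Φ
    rw [LinearMap.range_eq_top.mpr hsurj, finrank_top, Module.finrank_pi,
      Module.finrank_pi, Fintype.card_fin, Fintype.card_fin] at h
    rw [hCdker, Nat.sub_one_mul]
    omega
  refine ⟨hdim, ?_⟩
  -- lower bound on rank weights
  have hlow : ∀ x, x ∈ Cd → x ≠ 0 →
      2 ≤ Module.finrank Fq (Submodule.span Fq (Set.range x)) := by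
    intro x hx hx0
    by_contra hlt
    push_neg at hlt
    have hle1 : Module.finrank Fq (Submodule.span Fq (Set.range x)) ≤ 1 := by omega
    have hprin := (Submodule.finrank_le_one_iff_isPrincipal _).mp hle1
    obtain ⟨v, hv⟩ := hprin.principal
    have hxj : ∀ j, ∃ c : Fq, c • v = x j := by
      intro j
      have : x j ∈ Submodule.span Fq (Set.range x) :=
        Submodule.subset_span (Set.mem_range_self j)
      rw [hv] at this
      exact Submodule.mem_span_singleton.mp this
    choose c hc using hxj
    have hv0 : v ≠ 0 := by
      intro h
      apply hx0
      funext j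
      rw [← hc j, h, smul_zero]; rfl
    have hΦx : ∀ i, ∑ j, P j i * x j = 0 := by
      intro i
      rw [hCdker, LinearMap.mem_ker] at hx
      have := congrFun hx i
      rw [hΦapp] at this
      simpa using this
    have hcP : ∀ i, (∑ j, c j • P j) i = 0 := by
      intro i
      have h0 := hΦx i
      have : ∑ j, P j i * x j = (∑ j, c j • P j i) * v := by
        rw [Finset.sum_mul]
        refine Finset.sum_congr rfl fun j _ => ?_
        rw [← hc j, Algebra.smul_def, Algebra.smul_def]
        ring
      rw [this] at h0
      have := mul_eq_zero.mp h0
      rcases this with h | h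
      · simpa using h
      · exact absurd h hv0
    have hczero : ∀ j, c j = 0 := by
      apply Fintype.linearIndependent_iff.mp hPind
      funext i
      simpa using hcP i
    apply hx0
    funext j
    rw [← hc j, hczero j, zero_smul]; rfl
  -- existence of a weight-2 codeword
  intro hm2
  -- pick `α ∉ Fq`
  have hα : ∃ α : Fqm, α ∉ Submodule.span Fq ({1} : Set Fqm) := by
    by_contra h
    push_neg at h
    have htop : Submodule.span Fq ({1} : Set Fqm) = ⊤ :=
      eq_top_iff.mpr fun z _ => h z
    have h1 : Module.finrank Fq Fqm = 1 := by
      rw [← finrank_top Fq Fqm, ← htop]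
      exact finrank_span_singleton one_ne_zero
    omega
  obtain ⟨α, hα⟩ := hα
  set i0 : Fin k := ⟨0, hk0⟩
  set e0 : Fin k → Fqm := Pi.single i0 1 with he0
  have he0mem : e0 ∈ Submodule.span Fq (Set.range P) := hPspan ▸ Submodule.mem_top
  have hαe0mem : α • e0 ∈ Submodule.span Fq (Set.range P) := hPspan ▸ Submodule.mem_top
  obtain ⟨c, hc⟩ := (Submodule.mem_span_range_iff_exists_fun Fq).mp he0mem
  obtain ⟨d, hd⟩ := (Submodule.mem_span_range_iff_exists_fun Fq).mp hαe0mem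
  set y : Fin (m * k) → Fqm :=
    fun j => α * algebraMap Fq Fqm (c j) - algebraMap Fq Fqm (d j) with hy
  have hymem : y ∈ Cd := by
    rw [hCdker, LinearMap.mem_ker]
    funext i
    rw [hΦapp]
    have h1 : ∑ j, P j i * (α * algebraMap Fq Fqm (c j)) = α * (∑ j, c j • P j) i := by
      rw [Finset.sum_apply, Finset.mul_sum]
      refine Finset.sum_congr rfl fun j _ => ?_
      rw [Pi.smul_apply, Algebra.smul_def]
      ring
    have h2 : ∑ j, P j i * algebraMap Fq Fqm (d j) = (∑ j, d j • P j) i := by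
      rw [Finset.sum_apply]
      refine Finset.sum_congr rfl fun j _ => ?_
      rw [Pi.smul_apply, Algebra.smul_def]
      ring
    calc ∑ j, P j i * y j
        = ∑ j, (P j i * (α * algebraMap Fq Fqm (c j)) - P j i * algebraMap Fq Fqm (d j)) := by
          refine Finset.sum_congr rfl fun j _ => ?_
          rw [hy]; ring
      _ = (∑ j, P j i * (α * algebraMap Fq Fqm (c j))) -
            ∑ j, P j i * algebraMap Fq Fqm (d j) := Finset.sum_sub_distrib _ _
      _ = α * (∑ j, c j • P j) i - (∑ j, d j • P j) i := by rw [h1, h2]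
      _ = α * e0 i - (α • e0) i := by rw [hc, hd]
      _ = 0 := by rw [Pi.smul_apply, smul_eq_mul, sub_self]
      _ = (0 : Fin k → Fqm) i := rfl
  have hy0 : y ≠ 0 := by
    intro h0
    by_cases hcz : ∀ j, c j = 0
    · have : e0 = 0 := by
        rw [← hc]
        refine Finset.sum_eq_zero fun j _ => ?_
        rw [hcz j, zero_smul]
      have := congrFun this i0
      rw [he0] at this
      simp at this
    · push_neg at hcz
      obtain ⟨j, hcj⟩ := hcz
      have hj := congrFun h0 j
      rw [hy] at hj
      simp only [Pi.zero_apply, sub_eq_zero] at hj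
      have hcj' : algebraMap Fq Fqm (c j) ≠ 0 := by
        simpa using hcj
      have : α = algebraMap Fq Fqm (d j / c j) := by
        rw [map_div₀]
        field_simp
        linear_combination hj
      apply hα
      rw [this]
      have : algebraMap Fq Fqm (d j / c j) = (d j / c j) • (1 : Fqm) := by
        rw [Algebra.smul_def, mul_one]
      rw [this]
      exact Submodule.smul_mem _ _ (Submodule.subset_span rfl)
  -- the weight of `y` is at most 2
  have hyle : Module.finrank Fq (Submodule.span Fq (Set.range y)) ≤ 2 := by
    have hsub : Submodule.span Fq (Set.range y) ≤ Submodule.span Fq ({α, 1} : Set Fqm) := by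
      rw [Submodule.span_le]
      rintro _ ⟨j, rfl⟩
      have : y j = c j • α + (-(d j)) • (1 : Fqm) := by
        rw [hy, Algebra.smul_def, Algebra.smul_def, map_neg, mul_one]
        ring
      rw [this]
      exact Submodule.add_mem _
        (Submodule.smul_mem _ _ (Submodule.subset_span (Set.mem_insert _ _)))
        (Submodule.smul_mem _ _ (Submodule.subset_span (Set.mem_insert_of_mem _ rfl)))
    calc Module.finrank Fq (Submodule.span Fq (Set.range y))
        ≤ Module.finrank Fq (Submodule.span Fq ({α, 1} : Set Fqm)) :=
          Submodule.finrank_mono hsub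
      _ ≤ ({α, 1} : Set Fqm).toFinset.card := finrank_span_le_card _
      _ ≤ 2 := by
          rw [Set.toFinset_insert, Set.toFinset_singleton]
          exact (Finset.card_insert_le _ _).trans (by simp)
  have hyeq : Module.finrank Fq (Submodule.span Fq (Set.range y)) = 2 :=
    le_antisymm hyle (hlow y hymem hy0)
  -- conclude
  have h2mem : 2 ∈ { w | ∃ x ∈ Cd, x ≠ 0 ∧
      w = Module.finrank Fq (Submodule.span Fq (Set.range x)) } :=
    ⟨y, hymem, hy0, hyeq.symm⟩
  refine le_antisymm (Nat.sInf_le h2mem) (le_csInf ⟨2, h2mem⟩ ?_)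
  rintro b ⟨x, hx, hx0, rfl⟩
  exact hlow x hx hx0
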